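/- Let X be a real Banach space and let A ⊆ X be a bounded set that is not limited. Then there exist a sequence (xₙ)ₙ in A and δ > 0 such that for every strictly increasing sequence (n_k)ₖ of naturals and every sequence (y_k)ₖ in X with ‖y_k − x_{n_k}‖ ≤ δ for all k, the set {y_k : k ∈ ℕ} is not limited. (In other words, the limited bornology, consisting of the nonempty limited subsets of X, satisfies property (S).) -/

import Mathlib

open Bornology Filter Metric Set
open scoped NNReal Pointwise

section Defs

variable {X Z : Type*} [NormedAddCommGroup X] [NormedSpace ℝ X]
variable [NormedAddCommGroup Z] [NormedSpace ℝ Z]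

/-- `f` is `β`-differentiable at `x₀` with differential `L`. -/
def BetaDiffAt (β : Set (Set X)) (f : X → Z) (x₀ : X) (L : X →L[ℝ] Z) : Prop :=
  ∀ A ∈ β, ∀ ε > 0, ∃ δ > 0, ∀ t : ℝ, t ≠ 0 → |t| < δ → ∀ u ∈ A,
    ‖t⁻¹ • (f (x₀ + t • u) - f x₀) - L u‖ ≤ ε

/-- The Gâteaux bornology: nonempty finite sets. -/
def gateauxB (X : Type*) [NormedAddCommGroup X] : Set (Set X) :=
  {A | A.Nonempty ∧ A.Finite}

/-- The Fréchet bornology: nonempty bounded sets. -/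
def frechetB (X : Type*) [NormedAddCommGroup X] : Set (Set X) :=
  {A | A.Nonempty ∧ IsBounded A}

/-- The Hadamard bornology: nonempty relatively norm-compact sets. -/
def hadamardB (X : Type*) [NormedAddCommGroup X] : Set (Set X) :=
  {A | A.Nonempty ∧ IsCompact (closure A)}

/-- A bounded set is limited if every weak*-null sequence converges to 0 uniformly on it. -/
def IsLimitedSet (A : Set X) : Prop :=
  IsBounded A ∧ ∀ φ : ℕ → X →L[ℝ] ℝ,
    (∀ x : X, Tendsto (fun n => φ n x) atTop (nhds 0)) →
    ∀ ε > 0, ∃ N : ℕ, ∀ n ≥ N, ∀ x ∈ A, |φ n x| ≤ ε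

/-- The limited bornology: nonempty limited sets. -/
def limitedB (X : Type*) [NormedAddCommGroup X] [NormedSpace ℝ X] : Set (Set X) :=
  {A | A.Nonempty ∧ IsLimitedSet A}

/-- A set is relatively weakly compact if its closure in the weak topology is compact. -/
def RelWeaklyCompact (A : Set X) : Prop :=
  IsCompact (closure (⇑(toWeakSpace ℝ X) '' A) : Set (WeakSpace ℝ X))

/-- The weak-Hadamard bornology: nonempty relatively weakly compact sets. -/
def wHB (X : Type*) [NormedAddCommGroup X] [NormedSpace ℝ X] : Set (Set X) :=
  {A | A.Nonempty ∧ RelWeaklyCompact A}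

/-- A bornology (as a family of sets). -/
def IsBornologyFamily (β : Set (Set X)) : Prop :=
  (∀ A ∈ β, A.Nonempty ∧ IsBounded A) ∧
  (⋃ A ∈ β, A) = univ ∧
  (∀ A ∈ β, ∀ B ∈ β, A ∪ B ∈ β) ∧
  (∀ A ∈ β, ∀ B : Set X, B ⊆ A → B.Nonempty → B ∈ β)

/-- A vector bornology. -/
def IsVectorBornology (β : Set (Set X)) : Prop :=
  IsBornologyFamily β ∧
  (∀ A ∈ β, balancedHull ℝ A ∈ β) ∧
  (∀ A ∈ β, ∀ (x : X) (l : ℝ), (fun z => x + l • z) '' A ∈ β)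

/-- `(x, δ)` witnesses property (S) for the set `A`. -/
def WitnessS (β : Set (Set X)) (A : Set X) (x : ℕ → X) (δ : ℝ) : Prop :=
  (∀ n, x n ∈ A) ∧ 0 < δ ∧
  ∀ nk : ℕ → ℕ, StrictMono nk → ∀ y : ℕ → X,
    (∀ k, ‖y k - x (nk k)‖ ≤ δ) → Set.range y ∉ β

/-- Property (S) for a bornology. -/
def PropertyS (β : Set (Set X)) : Prop :=
  ∀ A : Set X, IsBounded A → A ∉ β → ∃ x δ, WitnessS β A x δ

/-- `T` is `β`-positively homogeneous differentiable at `y` with p.h. differential `R`. -/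
def PHDiffAt {Y : Type*} [NormedAddCommGroup Y] [NormedSpace ℝ Y]
    (β : Set (Set Y)) (T : Y → X) (y : Y) (R : Y → X) : Prop :=
  Continuous R ∧ (∀ c : ℝ, 0 ≤ c → ∀ z, R (c • z) = c • R z) ∧
  ∀ A ∈ β, ∀ ε > 0, ∃ δ > 0, ∀ t : ℝ, 0 < t → t < δ → ∀ z ∈ A,
    ‖t⁻¹ • (T (y + t • z) - T y) - R z‖ ≤ ε

end Defs


/-- the limited bornology satisfies property (S). -/
theorem limited_propertyS
    {X : Type*} [NormedAddCommGroup X] [NormedSpace ℝ X] [CompleteSpace X]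
    {A : Set X} (hAbd : IsBounded A) (hA : ¬ IsLimitedSet A) :
    ∃ (x : ℕ → X) (δ : ℝ), (∀ n, x n ∈ A) ∧ 0 < δ ∧
      ∀ nk : ℕ → ℕ, StrictMono nk → ∀ y : ℕ → X,
        (∀ k, ‖y k - x (nk k)‖ ≤ δ) → ¬ IsLimitedSet (Set.range y) := by
  have hP : ¬ ∀ φ : ℕ → X →L[ℝ] ℝ,
      (∀ x : X, Tendsto (fun n => φ n x) atTop (nhds 0)) →
      ∀ ε > 0, ∃ N : ℕ, ∀ n ≥ N, ∀ x ∈ A, |φ n x| ≤ ε := fun h => hA ⟨hAbd, h⟩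
  push_neg at hP
  obtain ⟨φ, hφnull, ε, hε, hfreq⟩ := hP
  -- Banach–Steinhaus: pointwise null sequences are uniformly bounded
  obtain ⟨C', hC'⟩ : ∃ C', ∀ n, ‖φ n‖ ≤ C' := by
    apply banach_steinhaus
    intro x
    obtain ⟨C, hC⟩ := ((hφnull x).norm.bddAbove_range)
    exact ⟨C, fun n => hC ⟨n, rfl⟩⟩
  set C : ℝ := max C' 0 with hCdef
  have hC0 : 0 ≤ C := le_max_right _ _
  have hC : ∀ n, ‖φ n‖ ≤ C := fun n => (hC' n).trans (le_max_left _ _)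
  -- extract a strictly increasing sequence of witnesses
  obtain ⟨m, hmmono, hm⟩ := Filter.extraction_of_frequently_atTop
    (Filter.frequently_atTop.2 hfreq)
  choose x hxA hx using hm
  set δ : ℝ := ε / (2 * (C + 1)) with hδdef
  have hδpos : 0 < δ := by positivity
  refine ⟨x, δ, hxA, hδpos, ?_⟩
  intro nk hnk y hy hL
  set ψ : ℕ → X →L[ℝ] ℝ := fun k => φ (m (nk k)) with hψdef
  have hψnull : ∀ z : X, Tendsto (fun k => ψ k z) atTop (nhds 0) := by
    intro z
    exact (hφnull z).comp ((hmmono.comp hnk).tendsto_atTop)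
  obtain ⟨N, hN⟩ := hL.2 ψ hψnull (ε / 2) (by positivity)
  have h1 : |ψ N (y N)| ≤ ε / 2 := hN N le_rfl (y N) ⟨N, rfl⟩
  have h2 : ε < |ψ N (x (nk N))| := hx (nk N)
  have h3 : |ψ N (y N) - ψ N (x (nk N))| ≤ C * δ := by
    calc |ψ N (y N) - ψ N (x (nk N))| = ‖ψ N (y N - x (nk N))‖ := by
          rw [map_sub]; rfl
      _ ≤ ‖ψ N‖ * ‖y N - x (nk N)‖ := (ψ N).le_opNorm _
      _ ≤ C * δ := mul_le_mul (hC _) (hy N) (norm_nonneg _) hC0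
  have hCδ : C * δ ≤ ε / 2 := by
    have : C * δ ≤ (C + 1) * δ := by nlinarith
    calc C * δ ≤ (C + 1) * δ := this
      _ = ε / 2 := by
        have hC1 : C + 1 ≠ 0 := by positivity
        rw [hδdef]; field_simp
  have : ε / 2 < |ψ N (y N)| := by
    have := abs_sub_abs_le_abs_sub (ψ N (x (nk N))) (ψ N (y N))
    have habs : |ψ N (x (nk N)) - ψ N (y N)| ≤ ε / 2 := by
      rw [abs_sub_comm]; exact h3.trans hCδ
    linarith
  linarith
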